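/- Let C, T, D be positive reals with C ≤ T and C ≤ D, U = C/T ≤ ρ ≤ 1. Define for Δ > C: ω^light(Δ) = max( work(Δ), (p₂+1)·C + max(0, C − ρ·(T − q₂)) ) where p₂ = ⌈(Δ−C)/T⌉ − 1 and q₂ = Δ − C − p₂·T, and ω^light(Δ) = Δ for 0 < Δ ≤ C. Then ω^light(Δ) ≤ C − C·U + U·Δ for all Δ > 0. -/
import Mathlib


noncomputable def work (C T t : ℝ) : ℝ := ⌊t / T⌋ * C + min C (t - ⌊t / T⌋ * T)

noncomputable def omegaLight (C T ρ Δ : ℝ) : ℝ :=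
  if Δ ≤ C then Δ
  else
    max (work C T Δ)
      ((((⌈(Δ - C) / T⌉ : ℝ) - 1) + 1) * C +
        max 0 (C - ρ * (T - (Δ - C - ((⌈(Δ - C) / T⌉ : ℝ) - 1) * T))))

theorem omegaLight_linear_upper_bound
    (C T D ρ : ℝ) (hC : 0 < C) (hT : 0 < T) (hD : 0 < D)
    (hCT : C ≤ T) (hCD : C ≤ D)
    (hρl : C / T ≤ ρ) (hρu : ρ ≤ 1) :
    ∀ Δ : ℝ, 0 < Δ →
      omegaLight C T ρ Δ ≤ C - C * (C / T) + (C / T) * Δ := by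
  intro Δ hΔ
  have hUT : (C / T) * T = C := div_mul_cancel₀ C hT.ne'
  have hU1 : C / T ≤ 1 := by rw [div_le_one hT]; exact hCT
  have hU0 : 0 < C / T := div_pos hC hT
  unfold omegaLight
  split_ifs with h
  · nlinarith [mul_nonneg (sub_nonneg.2 hU1) (sub_nonneg.2 h)]
  · push_neg at h
    apply max_le
    · unfold work
      have hk1 : (⌊Δ / T⌋ : ℝ) * T ≤ Δ := by
        rw [← le_div_iff₀ hT]; exact Int.floor_le _
      rcases le_total C (Δ - (⌊Δ / T⌋ : ℝ) * T) with hr | hr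
      · rw [min_eq_left hr]
        nlinarith [mul_le_mul_of_nonneg_left hr hU0.le]
      · rw [min_eq_right hr]
        nlinarith [mul_nonneg (sub_nonneg.2 hU1) (sub_nonneg.2 hr)]
    · set c : ℝ := (⌈(Δ - C) / T⌉ : ℝ) with hc
      set q : ℝ := Δ - C - (c - 1) * T with hq
      have hc1 : Δ - C ≤ c * T := by
        rw [← div_le_iff₀ hT]; exact Int.le_ceil _
      have hc2 : (c - 1) * T < Δ - C := by
        rw [← lt_div_iff₀ hT]
        have := Int.sub_one_lt_floor ((Δ - C) / T)
        have h2 : ((⌈(Δ - C) / T⌉ : ℤ) : ℝ) - 1 < (Δ - C) / T := by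
          have := Int.ceil_lt_add_one ((Δ - C) / T)
          linarith
        exact h2
      have hq1 : 0 < q := by simp only [hq]; linarith
      have hq2 : q ≤ T := by simp only [hq]; nlinarith
      have hmax : max 0 (C - ρ * (T - q)) ≤ (C / T) * q := by
        apply max_le
        · positivity
        · have : (C / T) * (T - q) ≤ ρ * (T - q) :=
            mul_le_mul_of_nonneg_right hρl (by linarith)
          nlinarith
      have hcq : (c - 1) * T = Δ - C - q := by simp [hq]
      nlinarith [mul_le_mul_of_nonneg_left hc2.le hU0.le]
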